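/- For any connected graphs G and H, if γ_P(G) = v_s(G) and γ_P(H) = v_s(H), then γ_P(G)·γ_P(H) ≤ γ_P(G □ H). -/

import Mathlib

namespace PaperPD

open SimpleGraph

variable {V : Type} {W : Type}

/-- Observation process for power domination on a simple graph. -/
inductive Observed (G : SimpleGraph V) (S : Set V) : V → Prop
  | mem : ∀ v ∈ S, Observed G S v
  | dom : ∀ u v, u ∈ S → G.Adj u v → Observed G S v
  | prop : ∀ u v, Observed G S u → G.Adj u v →
      (∀ w, G.Adj u w → w ≠ v → Observed G S w) → Observed G S v

/-- `S` is a power dominating set of `G`. -/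
def IsPDS (G : SimpleGraph V) (S : Set V) : Prop := ∀ v, Observed G S v

/-- Power domination number. -/
noncomputable def pdNum (G : SimpleGraph V) [Fintype V] : ℕ :=
  sInf {n | ∃ S : Finset V, S.card = n ∧ IsPDS G ↑S}

/-- Zero forcing process. -/
inductive Forced (G : SimpleGraph V) (S : Set V) : V → Prop
  | mem : ∀ v ∈ S, Forced G S v
  | prop : ∀ u v, Forced G S u → G.Adj u v →
      (∀ w, G.Adj u w → w ≠ v → Forced G S w) → Forced G S v

/-- Zero forcing number. -/
noncomputable def zNum (G : SimpleGraph V) [Fintype V] : ℕ :=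
  sInf {n | ∃ S : Finset V, S.card = n ∧ ∀ v, Forced G S v}

/-- Domination number. -/
noncomputable def domNum (G : SimpleGraph V) [Fintype V] : ℕ :=
  sInf {n | ∃ S : Finset V, S.card = n ∧ ∀ v, ∃ u ∈ S, v = u ∨ G.Adj u v}

/-- No induced `K_{1,3}`. -/
def ClawFree (G : SimpleGraph V) : Prop :=
  ∀ x a b c : V, a ≠ b → a ≠ c → b ≠ c →
    G.Adj x a → G.Adj x b → G.Adj x c →
    ¬ G.Adj a b → ¬ G.Adj a c → ¬ G.Adj b c → False

/-- No induced `K₄` minus an edge. -/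
def DiamondFree (G : SimpleGraph V) : Prop :=
  ∀ a b c d : V, a ≠ b → a ≠ c → a ≠ d → b ≠ c → b ≠ d → c ≠ d →
    G.Adj a b → G.Adj a c → G.Adj b c → G.Adj b d → G.Adj c d →
    ¬ G.Adj a d → False

/-- A leaf: a vertex with exactly one neighbor. -/
def IsLeaf (G : SimpleGraph V) (v : V) : Prop := ∃! u, G.Adj v u

/-- A strong support vertex: adjacent to at least two leaves. -/
def IsStrongSupport (G : SimpleGraph V) (x : V) : Prop :=
  ∃ a b, a ≠ b ∧ G.Adj x a ∧ G.Adj x b ∧ IsLeaf G a ∧ IsLeaf G b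

/-- Number of strong support vertices. -/
noncomputable def ssCount (G : SimpleGraph V) : ℕ :=
  Nat.card {v // IsStrongSupport G v}

/-- Connected with no bridges. -/
def TwoEdgeConnected (G : SimpleGraph V) : Prop :=
  G.Connected ∧ ∀ e, ¬ G.IsBridge e

/-- A loopless multigraph, given by symmetric edge multiplicities. -/
structure Multigraph (W : Type) where
  mult : W → W → ℕ
  symm : ∀ u v, mult u v = mult v u
  loopless : ∀ v, mult v v = 0

/-- Underlying simple graph of a multigraph. -/
def Multigraph.toSimple (M : Multigraph W) : SimpleGraph W where
  Adj u v := u ≠ v ∧ 0 < M.mult u v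
  symm := ⟨by intro u v h; exact ⟨h.1.symm, by rw [M.symm]; exact h.2⟩⟩
  loopless := ⟨by intro v h; exact h.1 rfl⟩

/-- Degree of a vertex in a multigraph (counting multiplicities). -/
def Multigraph.degree [Fintype W] (M : Multigraph W) (v : W) : ℕ :=
  ∑ u, M.mult v u

/-- Bridgeless multigraph: no single edge is a cut edge (a parallel edge
is never a bridge). -/
def Multigraph.Bridgeless (M : Multigraph W) : Prop :=
  ∀ u v, M.mult u v = 1 → ¬ M.toSimple.IsBridge s(u, v)

/-- A 2-factor of a multigraph, given by sub-multiplicities. -/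
def Multigraph.IsTwoFactor [Fintype W] (M : Multigraph W) (f : W → W → ℕ) : Prop :=
  (∀ u v, f u v ≤ M.mult u v) ∧ (∀ u v, f u v = f v u) ∧ (∀ v, ∑ u, f v u = 2)

/-- Observation process for power domination on a multigraph: propagation
only happens along single edges. -/
inductive MObserved (M : Multigraph W) (S : Set W) : W → Prop
  | mem : ∀ v ∈ S, MObserved M S v
  | dom : ∀ u v, u ∈ S → 0 < M.mult u v → MObserved M S v
  | prop : ∀ u v, MObserved M S u → M.mult u v = 1 →
      (∀ w, 0 < M.mult u w → w ≠ v → MObserved M S w) → MObserved M S v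

/-- Power domination number of a multigraph. -/
noncomputable def mpdNum (M : Multigraph W) [Fintype W] : ℕ :=
  sInf {n | ∃ S : Finset W, S.card = n ∧ ∀ v, MObserved M ↑S v}

/-- A leaf adjacent to `x` has `x` as its unique neighbor. -/
lemma leaf_unique {G : SimpleGraph V} {a x : V} (h : IsLeaf G a) (hx : G.Adj x a) :
    ∀ u, G.Adj a u → u = x := by
  obtain ⟨u₀, hu₀, huniq⟩ := h
  intro u hu
  rw [huniq u hu, huniq x hx.symm]

/-- A strong support vertex is not a leaf. -/
lemma ss_not_leaf {G : SimpleGraph V} {x : V} (hx : IsStrongSupport G x) :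
    ¬ IsLeaf G x := by
  obtain ⟨a, b, hab, hxa, hxb, _, _⟩ := hx
  rintro ⟨u, hu, huniq⟩
  exact hab ((huniq a hxa).trans (huniq b hxb).symm)

lemma ss_eq' {G : SimpleGraph V} {x x' z : V}
    (hx : IsStrongSupport G x) (hx' : IsStrongSupport G x')
    (h1 : z = x ∨ (IsLeaf G z ∧ G.Adj x z))
    (h2 : z = x' ∨ (IsLeaf G z ∧ G.Adj x' z)) : x = x' := by
  rcases h1 with rfl | ⟨hlz, hadj⟩
  · rcases h2 with rfl | ⟨hlz, _⟩
    · rfl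
    · exact absurd hlz (ss_not_leaf hx)
  · rcases h2 with rfl | ⟨_, hadj'⟩
    · exact absurd hlz (ss_not_leaf hx')
    · exact leaf_unique hlz hadj' x hadj.symm

/-- Key lemma: if a power dominating process never starts inside the block
`{x,a₁,a₂} × {y,b₁,b₂}`, then no corner `(aᵢ, bⱼ)` can ever be observed. -/
lemma key {G : SimpleGraph V} {H : SimpleGraph W}
    {S : Set (V × W)} {x a₁ a₂ : V} {y b₁ b₂ : W}
    (ha : a₁ ≠ a₂) (hxa₁ : G.Adj x a₁) (hxa₂ : G.Adj x a₂)
    (hl₁ : IsLeaf G a₁) (hl₂ : IsLeaf G a₂)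
    (hb : b₁ ≠ b₂) (hyb₁ : H.Adj y b₁) (hyb₂ : H.Adj y b₂)
    (hm₁ : IsLeaf H b₁) (hm₂ : IsLeaf H b₂)
    (hK : ∀ p ∈ S,
      ¬((p.1 = x ∨ p.1 = a₁ ∨ p.1 = a₂) ∧ (p.2 = y ∨ p.2 = b₁ ∨ p.2 = b₂))) :
    ∀ v, Observed (G.boxProd H) S v →
      (v.1 = a₁ ∨ v.1 = a₂) → (v.2 = b₁ ∨ v.2 = b₂) → False := by
  intro v hv
  induction hv with
  | mem v hvS =>
      intro hp hq
      exact hK v hvS ⟨Or.inr hp, Or.inr hq⟩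
  | dom u v huS hadj =>
      intro hp hq
      rw [SimpleGraph.boxProd_adj] at hadj
      rcases hadj with ⟨hadj1, heq⟩ | ⟨hadj2, heq⟩
      · have hu1 : u.1 = x := by
          rcases hp with h1 | h2
          · exact leaf_unique hl₁ hxa₁ u.1 (h1 ▸ hadj1).symm
          · exact leaf_unique hl₂ hxa₂ u.1 (h2 ▸ hadj1).symm
        exact hK u huS ⟨Or.inl hu1, Or.inr (heq ▸ hq)⟩
      · have hu2 : u.2 = y := by
          rcases hq with h1 | h2
          · exact leaf_unique hm₁ hyb₁ u.2 (h1 ▸ hadj2).symm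
          · exact leaf_unique hm₂ hyb₂ u.2 (h2 ▸ hadj2).symm
        exact hK u huS ⟨Or.inr (heq ▸ hp), Or.inl hu2⟩
  | prop u v hu hadj hall ihu ihall =>
      intro hp hq
      rw [SimpleGraph.boxProd_adj] at hadj
      rcases hadj with ⟨hadj1, heq⟩ | ⟨hadj2, heq⟩
      · -- u = (x, v.2); use the other leaf on the G side
        have hu1 : u.1 = x := by
          rcases hp with h1 | h2
          · exact leaf_unique hl₁ hxa₁ u.1 (h1 ▸ hadj1).symm
          · exact leaf_unique hl₂ hxa₂ u.1 (h2 ▸ hadj1).symm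
        rcases hp with h1 | h2
        · refine ihall (a₂, v.2) ?_ ?_ (Or.inr rfl) hq
          · rw [SimpleGraph.boxProd_adj]
            exact Or.inl ⟨hu1 ▸ hxa₂, heq⟩
          · intro hcontra
            exact ha (h1 ▸ congrArg Prod.fst hcontra).symm
        · refine ihall (a₁, v.2) ?_ ?_ (Or.inl rfl) hq
          · rw [SimpleGraph.boxProd_adj]
            exact Or.inl ⟨hu1 ▸ hxa₁, heq⟩
          · intro hcontra
            exact ha (h2 ▸ congrArg Prod.fst hcontra)
      · -- u = (v.1, y); use the other leaf on the H side
        have hu2 : u.2 = y := by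
          rcases hq with h1 | h2
          · exact leaf_unique hm₁ hyb₁ u.2 (h1 ▸ hadj2).symm
          · exact leaf_unique hm₂ hyb₂ u.2 (h2 ▸ hadj2).symm
        rcases hq with h1 | h2
        · refine ihall (v.1, b₂) ?_ ?_ hp (Or.inr rfl)
          · rw [SimpleGraph.boxProd_adj]
            exact Or.inr ⟨hu2 ▸ hyb₂, heq⟩
          · intro hcontra
            exact hb (h1 ▸ congrArg Prod.snd hcontra).symm
        · refine ihall (v.1, b₁) ?_ ?_ hp (Or.inl rfl)
          · rw [SimpleGraph.boxProd_adj]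
            exact Or.inr ⟨hu2 ▸ hyb₁, heq⟩
          · intro hcontra
            exact hb (h2 ▸ congrArg Prod.snd hcontra)

/-- Every power dominating set of `G □ H` meets the block of every
pair of strong supports. -/
lemma meets {G : SimpleGraph V} {H : SimpleGraph W}
    {S : Set (V × W)} (hS : IsPDS (G.boxProd H) S) {x : V} {y : W}
    (hx : IsStrongSupport G x) (hy : IsStrongSupport H y) :
    ∃ p, p ∈ S ∧ (p.1 = x ∨ (IsLeaf G p.1 ∧ G.Adj x p.1)) ∧
      (p.2 = y ∨ (IsLeaf H p.2 ∧ H.Adj y p.2)) := by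
  obtain ⟨a₁, a₂, ha, hxa₁, hxa₂, hl₁, hl₂⟩ := hx
  obtain ⟨b₁, b₂, hb, hyb₁, hyb₂, hm₁, hm₂⟩ := hy
  by_contra hcon
  have hK : ∀ p ∈ S,
      ¬((p.1 = x ∨ p.1 = a₁ ∨ p.1 = a₂) ∧ (p.2 = y ∨ p.2 = b₁ ∨ p.2 = b₂)) := by
    rintro p hp ⟨h1, h2⟩
    have h1' : p.1 = x ∨ (IsLeaf G p.1 ∧ G.Adj x p.1) := by
      rcases h1 with h | h | h
      · exact Or.inl h
      · exact Or.inr ⟨h ▸ hl₁, h ▸ hxa₁⟩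
      · exact Or.inr ⟨h ▸ hl₂, h ▸ hxa₂⟩
    have h2' : p.2 = y ∨ (IsLeaf H p.2 ∧ H.Adj y p.2) := by
      rcases h2 with h | h | h
      · exact Or.inl h
      · exact Or.inr ⟨h ▸ hm₁, h ▸ hyb₁⟩
      · exact Or.inr ⟨h ▸ hm₂, h ▸ hyb₂⟩
    exact hcon ⟨p, hp, h1', h2'⟩
  exact key ha hxa₁ hxa₂ hl₁ hl₂ hb hyb₁ hyb₂ hm₁ hm₂ hK (a₁, b₁)
    (hS (a₁, b₁)) (Or.inl rfl) (Or.inl rfl)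

theorem stmt11 {V W : Type} [Fintype V] [Fintype W]
    (G : SimpleGraph V) (H : SimpleGraph W)
    (hG : G.Connected) (hH : H.Connected)
    (he₁ : pdNum G = ssCount G) (he₂ : pdNum H = ssCount H) :
    pdNum G * pdNum H ≤ pdNum (G.boxProd H) := by
  classical
  rw [he₁, he₂]
  -- the defining set of pdNum (G □ H) is nonempty (take all vertices)
  have hne : {n | ∃ S : Finset (V × W), S.card = n ∧ IsPDS (G.boxProd H) ↑S}.Nonempty := by
    refine ⟨(Finset.univ : Finset (V × W)).card, Finset.univ, rfl, fun v => ?_⟩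
    exact Observed.mem v (by simp)
  obtain ⟨S, hcard, hPDS⟩ := Nat.sInf_mem hne
  rw [pdNum]
  rw [← hcard]
  -- choose, for each pair of strong supports, an element of S in its block
  choose p hpS hp1 hp2 using
    fun (xy : {v // IsStrongSupport G v} × {w // IsStrongSupport H w}) =>
      meets hPDS xy.1.2 xy.2.2
  have hinj : Function.Injective
      (fun xy : {v // IsStrongSupport G v} × {w // IsStrongSupport H w} =>
        (⟨p xy, hpS xy⟩ : {q // q ∈ S})) := by
    rintro ⟨⟨x, hx⟩, ⟨y, hy⟩⟩ ⟨⟨x', hx'⟩, ⟨y', hy'⟩⟩ h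
    simp only [Subtype.mk.injEq] at h
    have e1 := hp1 (⟨x, hx⟩, ⟨y, hy⟩)
    have e1' := hp1 (⟨x', hx'⟩, ⟨y', hy'⟩)
    rw [← h] at e1'
    have e2 := hp2 (⟨x, hx⟩, ⟨y, hy⟩)
    have e2' := hp2 (⟨x', hx'⟩, ⟨y', hy'⟩)
    rw [← h] at e2'
    have hxx : x = x' := ss_eq' hx hx' e1 e1'
    have hyy : y = y' := ss_eq' hy hy' e2 e2'
    simp [Prod.ext_iff, Subtype.ext_iff, hxx, hyy]
  have h1 : ssCount G * ssCount H =
      Nat.card ({v // IsStrongSupport G v} × {w // IsStrongSupport H w}) := by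
    rw [Nat.card_prod]; rfl
  have h2 : Nat.card ({v // IsStrongSupport G v} × {w // IsStrongSupport H w})
      ≤ Nat.card {q // q ∈ S} := Nat.card_le_card_of_injective _ hinj
  have h3 : Nat.card {q // q ∈ S} = S.card := by
    rw [Nat.card_eq_fintype_card, Fintype.card_coe]
  omega

end PaperPD
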